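/- arXiv:2311.08988 — 3 statements merged into one kernel-verified Lean document; each statement's English description precedes it below -/
import Mathlib

section
/- Let p be a prime and m a positive integer, and let Syl_{p^m} act on the edge-subgraphs of the complete graph K_{p^m} on vertex set (Z_p)^m. Then the fixed points of this action are exactly the m-fold lexicographic products of difference graphs over Z_p: fp(Syl_{p^m}, K_{p^m}) = { C^{A_1} ∘ ⋯ ∘ C^{A_m} : A_1, …, A_m ⊆ Z_p^+ }. -/
/-!
Statement 16: For a prime `p` and `m > 0`, the fixed points of the Sylow group
`Syl_{p^m}` acting on edge-subgraphs of the complete graph on `(Z_p)^m` are exactly the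
`m`-fold lexicographic products of difference graphs `C^{A_1} ∘ ⋯ ∘ C^{A_m}` with
`A_i ⊆ Z_p^+`.
-/

/-- `P` is a valid choice of `Z_p^+`: a set of nonzero elements containing exactly one
of `x` and `−x` for every nonzero `x`. -/
def IsPlusSet {R : Type*} [Ring R] (P : Set R) : Prop :=
  0 ∉ P ∧ ∀ x : R, x ≠ 0 → ((x ∈ P ∨ -x ∈ P) ∧ (x ∈ P → -x ∈ P → x = -x))

/-- The `m`-fold lexicographic product of difference graphs
`C^{A 1} ∘ ⋯ ∘ C^{A m}` on vertex set `(Z_p)^m`: two tuples are adjacent iff at the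
first index `i` (some index `i` preceded by agreement) their difference lies in
`A i ∪ (−A i)`. -/
def lexDiff {p m : ℕ} (A : Fin m → Set (ZMod p)) : SimpleGraph (Fin m → ZMod p) where
  Adj a b := a ≠ b ∧
    ∃ i : Fin m, (∀ j : Fin m, j < i → a j = b j) ∧ a i - b i ∈ A i ∪ -(A i)
  symm := by
    constructor
    rintro a b ⟨hne, i, hpre, hmem⟩
    refine ⟨hne.symm, i, fun j hj => (hpre j hj).symm, ?_⟩
    have h : b i - a i = -(a i - b i) := by ring
    rw [h]
    rcases hmem with h' | h'
    · exact Or.inr (by simpa using h')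
    · exact Or.inl (by simpa using h')
  loopless := ⟨fun a h => h.1 rfl⟩

/-- `σ` is an element of the Sylow group `Syl_{p^m}`: a map of the form
`(x_1,…,x_m) ↦ (x_1 + φ_0, x_2 + φ_1(x_1), …, x_m + φ_{m−1}(x_1,…,x_{m−1}))`,
where each `φ i` depends only on the coordinates `j < i`. -/
def IsSylElem {p m : ℕ} (σ : (Fin m → ZMod p) → (Fin m → ZMod p)) : Prop :=
  ∃ φ : Fin m → (Fin m → ZMod p) → ZMod p,
    (∀ (i : Fin m) (x y : Fin m → ZMod p),
      (∀ j : Fin m, j < i → x j = y j) → φ i x = φ i y) ∧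
    ∀ (x : Fin m → ZMod p) (i : Fin m), σ x i = x i + φ i x


section sylHelpers
variable {p m : ℕ}

private lemma syl_step {σ : (Fin m → ZMod p) → (Fin m → ZMod p)}
    {φ : Fin m → (Fin m → ZMod p) → ZMod p}
    (hφ : ∀ (i : Fin m) (x y : Fin m → ZMod p),
      (∀ j : Fin m, j < i → x j = y j) → φ i x = φ i y)
    (hval : ∀ (x : Fin m → ZMod p) (i : Fin m), σ x i = x i + φ i x)
    {x y : Fin m → ZMod p} (S : Fin m → Prop)
    (hS : ∀ j k : Fin m, S j → k < j → S k)
    (h : ∀ j, S j → σ x j = σ y j) : ∀ j, S j → x j = y j := by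
  have key : ∀ n : ℕ, ∀ j : Fin m, (j : ℕ) = n → S j → x j = y j := by
    intro n
    induction n using Nat.strong_induction_on with
    | _ n ih =>
      intro j hj hSj
      have hpre : ∀ k, k < j → x k = y k := by
        intro k hk
        have hk' : (k : ℕ) < n := by rw [← hj]; exact hk
        exact ih _ hk' k rfl (hS j k hSj hk)
      have h2 := h j hSj
      rw [hval x j, hval y j, hφ j x y hpre] at h2
      exact add_right_cancel h2
  exact fun j hSj => key j j rfl hSj

private lemma syl_injective {σ : (Fin m → ZMod p) → (Fin m → ZMod p)} (h : IsSylElem σ) :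
    Function.Injective σ := by
  obtain ⟨φ, hφ, hval⟩ := h
  intro x y hxy
  funext j
  exact syl_step hφ hval (fun _ => True) (fun _ _ _ _ => trivial)
    (fun j _ => congrFun hxy j) j trivial

private lemma syl_exists (a b c d : Fin m → ZMod p) (i : Fin m)
    (hab : ∀ j, j < i → a j = b j) (hcd : ∀ j, j < i → c j = d j)
    (hne : a i ≠ b i) (hdiff : c i - d i = a i - b i) :
    ∃ σ, IsSylElem σ ∧ σ a = c ∧ σ b = d := by
  classical
  set φ : Fin m → (Fin m → ZMod p) → ZMod p := fun j x =>
    if (∀ k, k < j → x k = a k) then c j - a j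
    else if (∀ k, k < j → x k = b k) then d j - b j else 0 with hφdef
  refine ⟨fun x j => x j + φ j x, ⟨φ, ?_, fun _ _ => rfl⟩, ?_, ?_⟩
  · intro j x y hxy
    have e1 : (∀ k, k < j → x k = a k) = (∀ k, k < j → y k = a k) := by
      apply propext
      constructor <;> intro h k hk
      · rw [← hxy k hk]; exact h k hk
      · rw [hxy k hk]; exact h k hk
    have e2 : (∀ k, k < j → x k = b k) = (∀ k, k < j → y k = b k) := by
      apply propext
      constructor <;> intro h k hk
      · rw [← hxy k hk]; exact h k hk
      · rw [hxy k hk]; exact h k hk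
    simp only [hφdef, e1, e2]
  · funext j
    have : φ j a = c j - a j := by
      rw [hφdef]; exact if_pos (fun k _ => rfl)
    simp only [this]; ring
  · funext j
    rcases lt_trichotomy j i with hji | hji | hji
    · have hcond : ∀ k, k < j → b k = a k := fun k hk => (hab k (hk.trans hji)).symm
      have : φ j b = c j - a j := by rw [hφdef]; exact if_pos hcond
      simp only [this]
      rw [← hab j hji, ← hcd j hji]; ring
    · subst hji
      have hcond : ∀ k, k < j → b k = a k := fun k hk => (hab k hk).symm
      have : φ j b = c j - a j := by rw [hφdef]; exact if_pos hcond
      simp only [this]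
      linear_combination hdiff
    · have hcond1 : ¬ (∀ k, k < j → b k = a k) := by
        intro h; exact hne ((h i hji).symm)
      have hcond2 : ∀ k, k < j → b k = b k := fun _ _ => rfl
      have : φ j b = d j - b j := by
        simp only [hφdef]
        rw [if_neg hcond1]
        simp
      show b j + φ j b = d j
      rw [this]; ring

private lemma fixed_adj_iff {A : SimpleGraph (Fin m → ZMod p)}
    (hA : ∀ σ, IsSylElem σ → Sym2.map σ '' A.edgeSet = A.edgeSet)
    {σ : (Fin m → ZMod p) → (Fin m → ZMod p)} (hσ : IsSylElem σ)
    (x y : Fin m → ZMod p) : A.Adj x y ↔ A.Adj (σ x) (σ y) := by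
  constructor
  · intro h
    have hmem : s(σ x, σ y) ∈ Sym2.map σ '' A.edgeSet :=
      ⟨s(x, y), A.mem_edgeSet.mpr h, Sym2.map_pair_eq σ x y⟩
    rw [hA σ hσ] at hmem
    exact A.mem_edgeSet.mp hmem
  · intro h
    have hmem : s(σ x, σ y) ∈ Sym2.map σ '' A.edgeSet := by
      rw [hA σ hσ]; exact A.mem_edgeSet.mpr h
    obtain ⟨e, he, hmap⟩ := hmem
    have he' : e = s(x, y) := by
      apply Sym2.map.injective (syl_injective hσ)
      rw [hmap, Sym2.map_pair_eq]
    rw [he'] at he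
    exact A.mem_edgeSet.mp he

private lemma adj_iff_image_eq [NeZero p] {A : SimpleGraph (Fin m → ZMod p)}
    {σ : (Fin m → ZMod p) → (Fin m → ZMod p)}
    (hinj : Function.Injective σ)
    (h : ∀ x y, A.Adj x y ↔ A.Adj (σ x) (σ y)) :
    Sym2.map σ '' A.edgeSet = A.edgeSet := by
  have hsurj : Function.Surjective σ := Finite.surjective_of_injective hinj
  apply Set.Subset.antisymm
  · rw [Set.image_subset_iff]
    intro e he
    induction e using Sym2.ind with
    | _ u v =>
      simp only [Set.mem_preimage, Sym2.map_pair_eq, SimpleGraph.mem_edgeSet] at *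
      exact (h u v).mp he
  · intro e he
    induction e using Sym2.ind with
    | _ x y =>
      obtain ⟨u, rfl⟩ := hsurj x
      obtain ⟨v, rfl⟩ := hsurj y
      exact ⟨s(u, v), A.mem_edgeSet.mpr ((h u v).mpr (A.mem_edgeSet.mp he)),
        Sym2.map_pair_eq σ u v⟩

/-- The vector supported at `i` with value `d`. -/
private def eps (i : Fin m) (d : ZMod p) : Fin m → ZMod p := fun j => if j = i then d else 0

private lemma adj_norm {A : SimpleGraph (Fin m → ZMod p)}
    (hA : ∀ σ, IsSylElem σ → Sym2.map σ '' A.edgeSet = A.edgeSet)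
    {a b : Fin m → ZMod p} {i : Fin m}
    (hpre : ∀ j, j < i → a j = b j) (hne : a i ≠ b i) :
    A.Adj a b ↔ A.Adj (eps i (a i - b i)) 0 := by
  obtain ⟨σ, hσ, ha, hb⟩ := syl_exists a b (eps i (a i - b i)) 0 i hpre
    (fun j hj => by simp [eps, Fin.ne_of_lt hj])
    hne (by simp [eps])
  rw [fixed_adj_iff hA hσ a b, ha, hb]

private lemma adj_sign {A : SimpleGraph (Fin m → ZMod p)}
    (hA : ∀ σ, IsSylElem σ → Sym2.map σ '' A.edgeSet = A.edgeSet)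
    {i : Fin m} {d : ZMod p} (hd : d ≠ 0) :
    A.Adj (eps i d) 0 ↔ A.Adj (eps i (-d)) 0 := by
  obtain ⟨σ, hσ, ha, hb⟩ := syl_exists (eps i d) 0 0 (eps i (-d)) i
    (fun j hj => by simp [eps, Fin.ne_of_lt hj])
    (fun j hj => by simp [eps, Fin.ne_of_lt hj])
    (by simp [eps, hd])
    (by simp [eps])
  rw [fixed_adj_iff hA hσ, ha, hb, A.adj_comm]

private lemma lexDiff_adj_iff {B : Fin m → Set (ZMod p)}
    {σ : (Fin m → ZMod p) → (Fin m → ZMod p)} (hσ : IsSylElem σ)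
    (x y : Fin m → ZMod p) : (lexDiff B).Adj x y ↔ (lexDiff B).Adj (σ x) (σ y) := by
  obtain ⟨φ, hφ, hval⟩ := hσ
  have hdiff : ∀ (x y : Fin m → ZMod p) (i : Fin m), (∀ j, j < i → x j = y j) →
      σ x i - σ y i = x i - y i := by
    intro x y i hpre
    rw [hval x i, hval y i, hφ i x y hpre]; ring
  constructor
  · rintro ⟨hne, i, hpre, hmem⟩
    refine ⟨fun h => hne (syl_injective ⟨φ, hφ, hval⟩ h), i, ?_, ?_⟩
    · intro j hj
      rw [hval x j, hval y j, hpre j hj, hφ j x y fun k hk => hpre k (hk.trans hj)]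
    · rw [hdiff x y i hpre]; exact hmem
  · rintro ⟨hne, i, hpre, hmem⟩
    have hxy : ∀ j, j < i → x j = y j :=
      syl_step hφ hval (fun j => j < i) (fun j k hj hk => hk.trans hj) hpre
    refine ⟨fun h => hne (by rw [h]), i, hxy, ?_⟩
    rwa [hdiff x y i hxy] at hmem

end sylHelpers

theorem stmt_16 (p m : ℕ) (hp : p.Prime) (hm : 0 < m)
    (P : Set (ZMod p)) (hP : IsPlusSet P) :
    {A : SimpleGraph (Fin m → ZMod p) |
        ∀ σ : (Fin m → ZMod p) → (Fin m → ZMod p),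
          IsSylElem σ → Sym2.map σ '' A.edgeSet = A.edgeSet} =
      {A : SimpleGraph (Fin m → ZMod p) |
        ∃ B : Fin m → Set (ZMod p), (∀ i, B i ⊆ P) ∧ A = lexDiff B} := by
  classical
  haveI : NeZero p := ⟨hp.ne_zero⟩
  ext A
  simp only [Set.mem_setOf_eq]
  constructor
  · intro hA
    refine ⟨fun i => {d | d ∈ P ∧ A.Adj (eps i d) 0}, fun i d hd => hd.1, ?_⟩
    ext a b
    constructor
    · intro hadj
      have hne : a ≠ b := A.ne_of_adj hadj
      have hex : (Finset.univ.filter fun i => a i ≠ b i).Nonempty := by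
        by_contra h
        rw [Finset.not_nonempty_iff_eq_empty, Finset.filter_eq_empty_iff] at h
        exact hne (funext fun i => not_not.mp (h (Finset.mem_univ i)))
      set i := Finset.min' _ hex with hidef
      have hi : a i ≠ b i := (Finset.mem_filter.mp (Finset.min'_mem _ hex)).2
      have hpre : ∀ j, j < i → a j = b j := by
        intro j hj
        by_contra hcon
        exact absurd hj (not_lt.mpr
          (Finset.min'_le _ j (Finset.mem_filter.mpr ⟨Finset.mem_univ _, hcon⟩)))
      have hd : a i - b i ≠ 0 := sub_ne_zero.mpr hi
      have hnorm := adj_norm hA hpre hi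
      refine ⟨hne, i, hpre, ?_⟩
      rcases (hP.2 _ hd).1 with hmem | hmem
      · exact Or.inl ⟨hmem, hnorm.mp hadj⟩
      · refine Or.inr ?_
        rw [Set.mem_neg]
        exact ⟨hmem, (adj_sign hA hd).mp (hnorm.mp hadj)⟩
    · rintro ⟨hne, i, hpre, hmem⟩
      have hd : a i - b i ≠ 0 := by
        intro h0
        rcases hmem with h | h
        · exact hP.1 (h0 ▸ h.1)
        · rw [Set.mem_neg] at h
          apply hP.1
          have := h.1
          rw [h0] at this
          simpa using this
      have hi : a i ≠ b i := fun h => hd (by rw [h]; ring)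
      have hnorm := adj_norm hA hpre hi
      rcases hmem with h | h
      · exact hnorm.mpr h.2
      · rw [Set.mem_neg] at h
        refine hnorm.mpr ((adj_sign hA hd).mpr ?_)
        simpa using h.2
  · rintro ⟨B, hB, rfl⟩
    intro σ hσ
    exact adj_iff_image_eq (syl_injective hσ) (lexDiff_adj_iff hσ)
end

section
/- Let p be a prime, m a positive integer, and A_1, …, A_m ⊆ Z_p^+. Then for every j ∈ {1,…,m}, the graph C^{∅} ∘ ⋯ ∘ C^{∅} ∘ C^{A_1} ∘ ⋯ ∘ C^{A_{m−j}} (with j empty factors in front) is isomorphic to an edge-subgraph (spanning subgraph) of C^{A_1} ∘ ⋯ ∘ C^{A_m}. -/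
open scoped Fin.NatCast

theorem stmt_17 (p m : ℕ) (hp : p.Prime) (hm : 0 < m)
    (P : Set (ZMod p)) (hP : IsPlusSet P)
    (A : Fin m → Set (ZMod p)) (hA : ∀ i, A i ⊆ P)
    (j : ℕ) (hj1 : 1 ≤ j) (hjm : j ≤ m) :
    ∃ H' : SimpleGraph (Fin m → ZMod p), H' ≤ lexDiff A ∧
      Nonempty
        ((lexDiff (fun i : Fin m =>
          if h : (i : ℕ) < j then (∅ : Set (ZMod p))
          else A ⟨(i : ℕ) - j, by have := i.isLt; omega⟩)) ≃g H') := by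
  rcases m with _ | n
  · omega
  set A' : Fin (n+1) → Set (ZMod p) := fun i : Fin (n+1) =>
    if h : (i : ℕ) < j then (∅ : Set (ZMod p))
    else A ⟨(i : ℕ) - j, by have := i.isLt; omega⟩ with hA'
  let ρ : Fin (n+1) ≃ Fin (n+1) := Equiv.addRight ((j : Fin (n+1)))
  let e : (Fin (n+1) → ZMod p) ≃ (Fin (n+1) → ZMod p) :=
    Equiv.arrowCongr ρ.symm (Equiv.refl _)
  have he : ∀ (x : Fin (n+1) → ZMod p) (k : Fin (n+1)), e x k = x (k + (j : Fin (n+1))) :=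
    fun x k => rfl
  have key : ∀ x y, (lexDiff A').Adj x y → (lexDiff A).Adj (e x) (e y) := by
    rintro x y ⟨hne, i, hpre, hmem⟩
    have hij : ¬ (i : ℕ) < j := by
      intro h
      rw [hA'] at hmem
      simp [h] at hmem
    have hji : j ≤ (i : ℕ) := le_of_not_gt hij
    have hjn : j < n + 1 := lt_of_le_of_lt hji i.isLt
    have hjv : ((j : Fin (n+1)) : ℕ) = j := by
      simp [Fin.val_natCast, Nat.mod_eq_of_lt hjn]
    refine ⟨fun h => hne (e.injective h), ⟨(i:ℕ) - j, by omega⟩, ?_, ?_⟩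
    · intro k hk
      have hkv : (k : ℕ) < (i : ℕ) - j := hk
      have hval : Fin.val (k + (j : Fin (n+1))) = (k : ℕ) + j := by
        simp only [Fin.add_def]
        show ((k:ℕ) + ((j : Fin (n+1)):ℕ)) % (n+1) = (k:ℕ) + j
        rw [hjv]; exact Nat.mod_eq_of_lt (by omega)
      have hlt : k + (j : Fin (n+1)) < i := by
        rw [Fin.lt_def, hval]; omega
      rw [he, he, hpre _ hlt]
    · have hval : Fin.val ((⟨(i:ℕ) - j, by omega⟩ : Fin (n+1)) + (j : Fin (n+1))) = (i : ℕ) := by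
        simp only [Fin.add_def]
        show (((i:ℕ) - j) + ((j : Fin (n+1)):ℕ)) % (n+1) = (i:ℕ)
        rw [hjv, Nat.sub_add_cancel hji]
        exact Nat.mod_eq_of_lt i.isLt
      have heq : ((⟨(i:ℕ) - j, by omega⟩ : Fin (n+1)) + (j : Fin (n+1))) = i := Fin.ext hval
      rw [he, he, heq]
      have : A' i = A ⟨(i : ℕ) - j, by omega⟩ := by rw [hA']; exact dif_neg hij
      rwa [this] at hmem
  refine ⟨{ Adj := fun a b => (lexDiff A').Adj (e.symm a) (e.symm b),
            symm := ⟨fun a b h => (lexDiff A').symm.symm _ _ h⟩,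
            loopless := ⟨fun a h => (lexDiff A').loopless.irrefl _ h⟩ }, ?_, ?_⟩
  · intro a b h
    have := key _ _ h
    simpa using this
  · exact ⟨{ toEquiv := e, map_rel_iff' := by intro a b; simp }⟩
end

section
/- Let p be a prime, m a positive integer, and A_1, …, A_m ⊆ Z_p^+ with at least one A_i nonempty, and let t := wr(A_1,…,A_m) be the empty-prefix, i.e. one less than the smallest index i with A_i ≠ ∅. Then the graph C^{A_1} ∘ ⋯ ∘ C^{A_m} contains the complete bipartite graph K_{p^{m−1−t}, p^{m−1−t}} as a subgraph; that is, there exist disjoint sets U, W of vertices, each of size p^{m−1−t}, such that every vertex of U is adjacent to every vertex of W. -/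
theorem stmt_18 (p m : ℕ) (hp : p.Prime) (hm : 0 < m)
    (P : Set (ZMod p)) (hP : IsPlusSet P)
    (A : Fin m → Set (ZMod p)) (hA : ∀ i, A i ⊆ P)
    -- `i₀` is the smallest (0-based) index with `A i₀ ≠ ∅`,
    -- so the empty-prefix is `t = (i₀ : ℕ)`
    (i₀ : Fin m) (hi₀ : A i₀ ≠ ∅) (hmin : ∀ j : Fin m, j < i₀ → A j = ∅)
    (t : ℕ) (ht : t = (i₀ : ℕ)) :
    ∃ U W : Finset (Fin m → ZMod p), Disjoint U W ∧
      U.card = p ^ (m - 1 - t) ∧ W.card = p ^ (m - 1 - t) ∧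
      ∀ u ∈ U, ∀ w ∈ W, (lexDiff A).Adj u w := by
  haveI : NeZero p := ⟨hp.pos.ne'⟩
  obtain ⟨a, ha⟩ := Set.nonempty_iff_ne_empty.2 hi₀
  have ha0 : a ≠ 0 := fun h => hP.1 (h ▸ hA i₀ ha)
  -- extension map
  let ext : ZMod p → ({j : Fin m // i₀ < j} → ZMod p) → (Fin m → ZMod p) :=
    fun c f j => if h : i₀ < j then f ⟨j, h⟩ else if j = i₀ then c else 0
  have hinj : ∀ c, Function.Injective (ext c) := by
    intro c f g hfg
    funext j
    have := congrFun hfg j.1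
    simpa [ext, j.2] using this
  have hval : ∀ c f (j : Fin m), j ≤ i₀ → ext c f j = if j = i₀ then c else 0 := by
    intro c f j hj
    simp only [ext, dif_neg (not_lt.2 hj)]
  refine ⟨Finset.univ.map ⟨ext 0, hinj 0⟩, Finset.univ.map ⟨ext a, hinj a⟩, ?_, ?_, ?_, ?_⟩
  · rw [Finset.disjoint_left]
    rintro x hx hx'
    simp only [Finset.mem_map, Finset.mem_univ, Function.Embedding.coeFn_mk] at hx hx'
    obtain ⟨f, -, rfl⟩ := hx
    obtain ⟨g, -, hg⟩ := hx'
    have := congrFun hg i₀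
    rw [hval a g i₀ le_rfl, hval 0 f i₀ le_rfl] at this
    simp at this
    exact ha0 this
  · rw [Finset.card_map, Finset.card_univ, Fintype.card_fun, ZMod.card,
      Fintype.card_subtype, ht, ← Fin.card_Ioi i₀]
    congr 2
    ext j
    simp [Finset.mem_Ioi]
  · rw [Finset.card_map, Finset.card_univ, Fintype.card_fun, ZMod.card,
      Fintype.card_subtype, ht, ← Fin.card_Ioi i₀]
    congr 2
    ext j
    simp [Finset.mem_Ioi]
  · intro u hu w hw
    simp only [Finset.mem_map, Finset.mem_univ, Function.Embedding.coeFn_mk] at hu hw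
    obtain ⟨f, -, rfl⟩ := hu
    obtain ⟨g, -, rfl⟩ := hw
    have hui : ext 0 f i₀ = 0 := by rw [hval 0 f i₀ le_rfl]; simp
    have hwi : ext a g i₀ = a := by rw [hval a g i₀ le_rfl]; simp
    refine ⟨?_, i₀, ?_, ?_⟩
    · intro h
      exact ha0 (by rw [← hwi, ← h, hui])
    · intro j hj
      rw [hval 0 f j hj.le, hval a g j hj.le, if_neg hj.ne, if_neg hj.ne]
    · rw [hui, hwi]
      right
      simpa using ha
end
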